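/- Fix $0 < \bar\alpha_t < \bar\alpha_{t-1} < 1$, set $v_t = 1 - \bar\alpha_t$, $v_{t-1} = 1 - \bar\alpha_{t-1}$, and $b_t = \sqrt{v_{t-1}} - \sqrt{\bar\alpha_{t-1}}\sqrt{v_t}/\sqrt{\bar\alpha_t}$. Define $f_t(\lambda) = \sqrt{\bar\alpha_{t-1}/\bar\alpha_t} - |b_t| \sqrt{v_t}/(\lambda\bar\alpha_t + v_t)$ for $\lambda > 0$. Then (i) $f_t$ is strictly increasing on $(0,\infty)$; (ii) $f_t(1) < 1$; (iii) there is a unique $\lambda^*(t) > 1$ with $f_t(\lambda^*(t)) = 1$, given by $\lambda^*(t) = \sqrt{v_t}(\sqrt{v_t} - \sqrt{v_{t-1}}) / ((\sqrt{\bar\alpha_{t-1}} - \sqrt{\bar\alpha_t})\sqrt{\bar\alpha_t})$; and (iv) $f_t(\lambda) < 1$ if and only if $\lambda < \lambda^*(t)$. -/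

import Mathlib

private theorem stmt_7_aux (A V c K L : ℝ) (M : ℝ) (hA : 0 < A) (hV : 0 < V)
    (hc : 0 < c) (hK : 0 < K) (hL1 : 1 < L) (F : ℝ → ℝ)
    (hF : ∀ lam : ℝ, F lam = M - c / (lam * A + V))
    (hid : ∀ lam : ℝ, 0 < lam → F lam - 1 = (lam - L) * K / (lam * A + V)) :
    StrictMonoOn F (Set.Ioi 0) ∧ F 1 < 1 ∧
    (1 < L ∧ F L = 1 ∧ ∀ lam : ℝ, 0 < lam → F lam = 1 → lam = L) ∧
    (∀ lam : ℝ, 0 < lam → (F lam < 1 ↔ lam < L)) := by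
  have hD : ∀ lam : ℝ, 0 < lam → 0 < lam * A + V := fun lam hlam => by
    have := mul_pos hlam hA; linarith
  have hL0 : (0:ℝ) < L := by linarith
  have hiff : ∀ lam : ℝ, 0 < lam → (F lam < 1 ↔ lam < L) := by
    intro lam hlam
    have hid' := hid lam hlam
    have hDl := hD lam hlam
    constructor
    · intro h
      have hlt : (lam - L) * K / (lam * A + V) < 0 := by linarith
      have h2 : (lam - L) * K < 0 := by
        by_contra hcon
        push_neg at hcon
        exact absurd (div_nonneg hcon hDl.le) (not_le.2 hlt)
      nlinarith
    · intro h
      have : (lam - L) * K / (lam * A + V) < 0 :=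
        div_neg_of_neg_of_pos (mul_neg_of_neg_of_pos (by linarith) hK) hDl
      linarith
  refine ⟨?_, ?_, ⟨hL1, ?_, ?_⟩, hiff⟩
  · intro x hx y hy hxy
    simp only [Set.mem_Ioi] at hx hy
    have hDx := hD x hx
    have hDy := hD y hy
    have hlt : x * A + V < y * A + V := by nlinarith
    have : c / (y * A + V) < c / (x * A + V) := div_lt_div_of_pos_left hc hDx hlt
    rw [hF x, hF y]; linarith
  · exact (hiff 1 one_pos).2 hL1
  · have := hid L hL0
    simp only [sub_self, zero_mul, zero_div] at this
    linarith
  · intro lam hlam hfl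
    have hid' := hid lam hlam
    rw [hfl, sub_self] at hid'
    have hDl := hD lam hlam
    have : (lam - L) * K = 0 := by
      rcases div_eq_zero_iff.1 hid'.symm with h | h
      · exact h
      · exact absurd h (ne_of_gt hDl)
    rcases mul_eq_zero.1 this with h | h
    · linarith
    · exact absurd h (ne_of_gt hK)

set_option maxHeartbeats 1600000 in
/-- properties of the per-step diagonal expansion function
`f_t(λ) = √(ᾱ_{t-1}/ᾱ_t) - |b_t| √v_t/(λ ᾱ_t + v_t)` for `0 < ᾱ_t < ᾱ_{t-1} < 1`:
(i) strictly increasing on `(0,∞)`; (ii) `f_t(1) < 1`; (iii) a unique `λ*(t) > 1`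
with `f_t(λ*(t)) = 1`, given by the closed form; (iv) `f_t(λ) < 1 ↔ λ < λ*(t)`. -/
theorem stmt_7 (aprev acur : ℝ) (h1 : 0 < acur) (h2 : acur < aprev) (h3 : aprev < 1) :
    let v : ℝ := 1 - acur
    let vprev : ℝ := 1 - aprev
    let b : ℝ := Real.sqrt vprev - Real.sqrt aprev * Real.sqrt v / Real.sqrt acur
    let f : ℝ → ℝ := fun lam =>
      Real.sqrt (aprev / acur) - |b| * Real.sqrt v / (lam * acur + v)
    let lamstar : ℝ := Real.sqrt v * (Real.sqrt v - Real.sqrt vprev) /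
      ((Real.sqrt aprev - Real.sqrt acur) * Real.sqrt acur)
    StrictMonoOn f (Set.Ioi 0) ∧
    f 1 < 1 ∧
    (1 < lamstar ∧ f lamstar = 1 ∧ ∀ lam : ℝ, 0 < lam → f lam = 1 → lam = lamstar) ∧
    (∀ lam : ℝ, 0 < lam → (f lam < 1 ↔ lam < lamstar)) := by
  intro v vprev b f lamstar
  have hv : (0:ℝ) < v := by simp only [v]; linarith
  have hvp : (0:ℝ) < vprev := by simp only [vprev]; linarith
  have hvpv : vprev < v := by simp only [v, vprev]; linarith
  set sa := Real.sqrt acur with hsadef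
  set sp := Real.sqrt aprev with hspdef
  set sv := Real.sqrt v with hsvdef
  set sq := Real.sqrt vprev with hsqdef
  have hsa : sa ^ 2 = acur := Real.sq_sqrt h1.le
  have hsp : sp ^ 2 = aprev := Real.sq_sqrt (by linarith)
  have hsv : sv ^ 2 = v := Real.sq_sqrt hv.le
  have hsq : sq ^ 2 = vprev := Real.sq_sqrt hvp.le
  have hs1 : sv ^ 2 = 1 - sa ^ 2 := by rw [hsv, hsa]
  have hs2 : sq ^ 2 = 1 - sp ^ 2 := by rw [hsq, hsp]
  have hsa0 : 0 < sa := Real.sqrt_pos.2 h1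
  have hsp0 : 0 < sp := Real.sqrt_pos.2 (by linarith)
  have hsv0 : 0 < sv := Real.sqrt_pos.2 hv
  have hsq0 : 0 < sq := Real.sqrt_pos.2 hvp
  have hsasp : sa < sp := Real.sqrt_lt_sqrt h1.le h2
  have hsqsv : sq < sv := Real.sqrt_lt_sqrt hvp.le hvpv
  have hcross : sa * sq < sp * sv := by
    have h : (sa * sq) ^ 2 < (sp * sv) ^ 2 := by
      have hav : acur * vprev < aprev * v := by simp only [v, vprev]; nlinarith
      calc (sa * sq) ^ 2 = acur * vprev := by rw [mul_pow, hsa, hsq]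
        _ < aprev * v := hav
        _ = (sp * sv) ^ 2 := by rw [mul_pow, hsp, hsv]
    nlinarith [mul_pos hsa0 hsq0, mul_pos hsp0 hsv0]
  have hb : b < 0 := by
    simp only [b]
    rw [sub_neg, lt_div_iff₀ hsa0]
    linarith [hcross]
  have habs : |b| = sp * sv / sa - sq := by
    rw [abs_of_neg hb]; simp only [b]; ring
  have hM : Real.sqrt (aprev / acur) = sp / sa := Real.sqrt_div (by linarith) _
  have hK : 0 < (sp - sa) * sa := mul_pos (by linarith) hsa0
  have hc : 0 < |b| * sv := by
    rw [habs]
    have hlt : sq < sp * sv / sa := by rw [lt_div_iff₀ hsa0]; linarith [hcross]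
    nlinarith
  have hfeq : ∀ lam : ℝ, f lam = Real.sqrt (aprev / acur) - |b| * sv / (lam * acur + v) :=
    fun _ => rfl
  have hLeq : lamstar = sv * (sv - sq) / ((sp - sa) * sa) := rfl
  have hveq : v = 1 - acur := rfl
  clear_value sa sp sv sq v vprev b f lamstar
  have hL1 : 1 < lamstar := by
    rw [hLeq, lt_div_iff₀ hK]
    nlinarith [sq_nonneg (sv - sq), mul_pos (sub_pos.2 hsasp) (sub_pos.2 hsasp)]
  have hfid : ∀ lam : ℝ, 0 < lam →
      f lam - 1 = (lam - lamstar) * ((sp - sa) * sa) / (lam * acur + v) := by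
    intro lam hlam
    have hDl : 0 < lam * acur + v := by have := mul_pos hlam h1; linarith
    rw [hfeq lam, habs, hM, hLeq]
    rw [← hsa, ← hsv] at hDl ⊢
    have hspa : sp - sa ≠ 0 := (sub_pos.2 hsasp).ne'
    have hsa0' : sa ≠ 0 := hsa0.ne'
    field_simp
    ring
  exact stmt_7_aux acur v (|b| * sv) ((sp - sa) * sa) lamstar (Real.sqrt (aprev / acur))
    h1 hv hc hK hL1 f hfeq hfid
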